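/- Let F : [0,∞)^K → [0,∞) be Borel measurable and suppose that for every probability space (X, Q) and every K-tuple of e-variables E_1,…,E_K on X, the function F(E_1,…,E_K) has Q-expectation at most 1 (no monotonicity assumed). Then there exists w ∈ [0,1]^K with ∑_{k=1}^K w_k ≤ 1 such that F(u) ≤ 1 + ∑_{k=1}^K w_k (u_k − 1) for all u ∈ [0,∞)^K. -/

import Mathlib

open BigOperators MeasureTheory

set_option linter.unusedVariables false

lemma aux_lintegral_wdirac {ι : Type} (t : Finset ι) (w : ι → ℝ) (g : ι → ENNReal) :
    ∫⁻ x, g x ∂(∑ i ∈ t, ENNReal.ofReal (w i) • @Measure.dirac ι ⊤ i) =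
      ∑ i ∈ t, ENNReal.ofReal (w i) * g i := by
  letI : MeasurableSpace ι := ⊤
  haveI : MeasurableSingletonClass ι := ⟨fun a => trivial⟩
  rw [lintegral_finset_sum_measure]
  refine Finset.sum_congr rfl fun i _ => ?_
  rw [lintegral_smul_measure, lintegral_dirac, smul_eq_mul]

lemma aux_disjoint {K : ℕ} (F : (Fin K → ℝ) → ℝ)
    (hF0 : ∀ u : Fin K → ℝ, (∀ k, 0 ≤ u k) → 0 ≤ F u)
    (hmerge : ∀ (X : Type) (_ : MeasurableSpace X) (Q : Measure X),
      IsProbabilityMeasure Q →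
      ∀ E : Fin K → X → ℝ, (∀ k, Measurable (E k)) → (∀ k x, 0 ≤ E k x) →
      (∀ k, ∫⁻ x, ENNReal.ofReal (E k x) ∂Q ≤ 1) →
      ∫⁻ x, ENNReal.ofReal (F (fun k => E k x)) ∂Q ≤ 1) :
    Disjoint ((⋂ k : Fin K, {p : (Fin K → ℝ) × ℝ | p.1 k < 1}) ∩ {p | 1 < p.2})
      (convexHull ℝ {p : (Fin K → ℝ) × ℝ | ∃ u, (∀ k, 0 ≤ u k) ∧ p = (u, F u)}) := by
  rw [Set.disjoint_left]
  rintro p ⟨hp1, hp2⟩ hpA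
  rw [convexHull_eq] at hpA
  obtain ⟨ι, tset, wt, z, hw0, hw1, hzA, hcm⟩ := hpA
  rw [Finset.centerMass_eq_of_sum_1 _ _ hw1] at hcm
  simp only [Set.mem_setOf_eq] at hp2
  have hp1' : ∀ k, p.1 k < 1 := fun k => Set.mem_iInter.1 hp1 k
  -- properties of z on tset
  have hz : ∀ i ∈ tset, (∀ k, 0 ≤ (z i).1 k) ∧ (z i).2 = F ((z i).1) := by
    intro i hi
    obtain ⟨u, hu, hzi⟩ := hzA i hi
    rw [hzi]; exact ⟨hu, rfl⟩
  -- components of p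
  have hp1eq : ∀ k, p.1 k = ∑ i ∈ tset, wt i * (z i).1 k := by
    intro k
    rw [← hcm, Prod.fst_sum, Finset.sum_apply]
    exact Finset.sum_congr rfl fun i _ => rfl
  have hp2eq : p.2 = ∑ i ∈ tset, wt i * (z i).2 := by
    rw [← hcm, Prod.snd_sum]
    exact Finset.sum_congr rfl fun i _ => rfl
  -- the discrete measure
  set Q : @Measure ι ⊤ := ∑ i ∈ tset, ENNReal.ofReal (wt i) • @Measure.dirac ι ⊤ i with hQ
  haveI hQprob : @IsProbabilityMeasure ι ⊤ Q := by
    constructor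
    rw [hQ, Measure.finset_sum_apply]
    have : ∀ i ∈ tset, (ENNReal.ofReal (wt i) • @Measure.dirac ι ⊤ i) Set.univ
        = ENNReal.ofReal (wt i) := by
      intro i _
      rw [Measure.smul_apply, smul_eq_mul, @Measure.dirac_apply_of_mem ι ⊤ _ _ (Set.mem_univ i),
        mul_one]
    rw [Finset.sum_congr rfl this, ← ENNReal.ofReal_sum_of_nonneg hw0, hw1, ENNReal.ofReal_one]
  -- the e-variables
  set U : ι → (Fin K → ℝ) := fun i k => max ((z i).1 k) 0 with hUdef
  have hUmem : ∀ i ∈ tset, U i = (z i).1 := by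
    intro i hi
    funext k
    exact max_eq_left ((hz i hi).1 k)
  have key := hmerge ι ⊤ Q hQprob (fun k i => U i k)
    (fun k => measurable_from_top) (fun k i => le_max_right _ _) ?_
  · -- contradiction from the F-integral
    rw [show (fun x => ENNReal.ofReal (F (fun k => U x k))) = fun x => ENNReal.ofReal (F (U x))
        from rfl] at key
    rw [hQ, aux_lintegral_wdirac] at key
    have : ∑ i ∈ tset, ENNReal.ofReal (wt i) * ENNReal.ofReal (F (U i))
        = ENNReal.ofReal p.2 := by
      rw [hp2eq, ENNReal.ofReal_sum_of_nonneg
        (fun i hi => mul_nonneg (hw0 i hi) (by rw [(hz i hi).2]; exact hF0 _ (hz i hi).1))]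
      refine Finset.sum_congr rfl fun i hi => ?_
      rw [ENNReal.ofReal_mul (hw0 i hi), hUmem i hi, (hz i hi).2]
    rw [this, ENNReal.ofReal_le_one] at key
    linarith
  · -- the mean conditions
    intro k
    rw [hQ, aux_lintegral_wdirac]
    have : ∑ i ∈ tset, ENNReal.ofReal (wt i) * ENNReal.ofReal (U i k)
        = ENNReal.ofReal (p.1 k) := by
      rw [hp1eq k, ENNReal.ofReal_sum_of_nonneg
        (fun i hi => mul_nonneg (hw0 i hi) ((hz i hi).1 k))]
      refine Finset.sum_congr rfl fun i hi => ?_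
      rw [ENNReal.ofReal_mul (hw0 i hi), hUmem i hi]
    rw [this, ENNReal.ofReal_le_one]
    exact (hp1' k).le

lemma aux_f_eq {K : ℕ} (f : ((Fin K → ℝ) × ℝ) →L[ℝ] ℝ) (m : Fin K → ℝ) (t : ℝ) :
    f (m, t) = (∑ k, m k * f ((Pi.single k (1:ℝ) : Fin K → ℝ), (0:ℝ))) + t * f (0, 1) := by
  have h : (m, t) = (∑ k, m k • ((Pi.single k (1:ℝ) : Fin K → ℝ), (0:ℝ)))
      + t • ((0 : Fin K → ℝ), (1:ℝ)) := by
    apply Prod.ext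
    · funext j
      simp [Prod.fst_sum, Finset.sum_apply, Pi.single_apply, mul_ite, Finset.sum_ite_eq]
    · simp [Prod.snd_sum]
  rw [h, map_add, map_sum]
  congr 1
  · exact Finset.sum_congr rfl fun k _ => by rw [f.map_smul]; rfl
  · rw [f.map_smul]; rfl

/-- main theorem: any Borel measurable nonnegative `F` whose
composition with any tuple of e-variables is again an e-variable (no
monotonicity assumed) satisfies `F(u) ≤ 1 + ∑ w_k (u_k - 1)` on the orthant,
for some `w ∈ [0,1]^K` with `∑ w_k ≤ 1`. -/
theorem stmt_7 (K : ℕ) (hK : 1 ≤ K) (F : (Fin K → ℝ) → ℝ)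
    (hFmeas : Measurable F)
    (hF0 : ∀ u : Fin K → ℝ, (∀ k, 0 ≤ u k) → 0 ≤ F u)
    (hmerge : ∀ (X : Type) (_ : MeasurableSpace X) (Q : Measure X),
      IsProbabilityMeasure Q →
      ∀ E : Fin K → X → ℝ, (∀ k, Measurable (E k)) → (∀ k x, 0 ≤ E k x) →
      (∀ k, ∫⁻ x, ENNReal.ofReal (E k x) ∂Q ≤ 1) →
      ∫⁻ x, ENNReal.ofReal (F (fun k => E k x)) ∂Q ≤ 1) :
    ∃ w : Fin K → ℝ, (∀ k, 0 ≤ w k ∧ w k ≤ 1) ∧ ∑ k, w k ≤ 1 ∧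
      ∀ u : Fin K → ℝ, (∀ k, 0 ≤ u k) → F u ≤ 1 + ∑ k, w k * (u k - 1) := by
  have hdisj := aux_disjoint F hF0 hmerge
  set A : Set ((Fin K → ℝ) × ℝ) := {p | ∃ u, (∀ k, 0 ≤ u k) ∧ p = (u, F u)} with hA
  set B : Set ((Fin K → ℝ) × ℝ) :=
    (⋂ k : Fin K, {p : (Fin K → ℝ) × ℝ | p.1 k < 1}) ∩ {p | 1 < p.2} with hBdef
  have hBopen : IsOpen B := by
    refine IsOpen.inter (isOpen_iInter_of_finite fun k => ?_) ?_
    · exact isOpen_lt ((continuous_apply k).comp continuous_fst) continuous_const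
    · exact isOpen_lt continuous_const continuous_snd
  have hBconv : Convex ℝ B := by
    refine Convex.inter (convex_iInter fun k => ?_) ?_
    · exact convex_halfSpace_lt ⟨fun x y => rfl, fun c x => rfl⟩ 1
    · exact convex_halfSpace_gt ⟨fun x y => rfl, fun c x => rfl⟩ 1
  obtain ⟨f, β, hB, hAsep⟩ :=
    geometric_hahn_banach_open hBconv hBopen (convex_convexHull ℝ A) hdisj
  set c' : ℝ := f (0, 1) with hc'def
  set a : Fin K → ℝ := fun k => f ((Pi.single k (1:ℝ) : Fin K → ℝ), (0:ℝ)) with hadef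
  have hBmem : ∀ (m : Fin K → ℝ) (t : ℝ), (∀ k, m k < 1) → 1 < t → (m, t) ∈ B := by
    intro m t hm ht
    exact ⟨Set.mem_iInter.2 fun k => hm k, ht⟩
  have hB' : ∀ (m : Fin K → ℝ) (t : ℝ), (∀ k, m k < 1) → 1 < t →
      (∑ k, m k * a k) + t * c' < β := by
    intro m t hm ht
    have := hB (m, t) (hBmem m t hm ht)
    rwa [aux_f_eq] at this
  have hA' : ∀ u : Fin K → ℝ, (∀ k, 0 ≤ u k) → β ≤ (∑ k, u k * a k) + F u * c' := by
    intro u hu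
    have := hAsep (u, F u) (subset_convexHull ℝ A ⟨u, hu, rfl⟩)
    rwa [aux_f_eq] at this
  -- c' ≤ 0
  have hc'le : c' ≤ 0 := by
    by_contra h
    push_neg at h
    set t : ℝ := max 2 ((β + 1) / c') with htdef
    have ht1 : 1 < t := lt_of_lt_of_le one_lt_two (le_max_left _ _)
    have h2 := hB' (fun _ => 0) t (fun k => one_pos) ht1
    simp only [zero_mul, Finset.sum_const_zero, zero_add] at h2
    have : β + 1 ≤ t * c' := by
      have := mul_le_mul_of_nonneg_right (le_max_right 2 ((β + 1) / c')) h.le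
      rwa [div_mul_cancel₀ _ h.ne'] at this
    linarith
  -- a k ≥ 0
  have ha : ∀ k, 0 ≤ a k := by
    intro k
    by_contra h
    push_neg at h
    set T : ℝ := max 0 ((β - 2 * c' + 1) / (-(a k))) with hTdef
    have hT0 : 0 ≤ T := le_max_left _ _
    have hm : ∀ j, (Pi.single k (-T) : Fin K → ℝ) j < 1 := by
      intro j
      rcases eq_or_ne j k with rfl | hjk
      · simp; linarith
      · simp [Pi.single_apply, hjk]
    have h2 := hB' (Pi.single k (-T)) 2 hm one_lt_two
    have hsum : ∑ j, (Pi.single k (-T) : Fin K → ℝ) j * a j = -T * a k := by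
      simp [Pi.single_apply, ite_mul, Finset.sum_ite_eq]
    rw [hsum] at h2
    have hak : 0 < -(a k) := by linarith
    have : β - 2 * c' + 1 ≤ -T * a k := by
      have := mul_le_mul_of_nonneg_right (le_max_right 0 ((β - 2 * c' + 1) / (-(a k)))) hak.le
      rw [div_mul_cancel₀ _ hak.ne'] at this
      calc β - 2 * c' + 1 ≤ T * -(a k) := this
        _ = -T * a k := by ring
    linarith
  -- sum bound
  have hsumβ : (∑ k, a k) + c' ≤ β := by
    have hseq : ∀ n : ℕ, (1 - 1 / ((n : ℝ) + 1)) * (∑ k, a k) + (1 + 1 / ((n : ℝ) + 1)) * c' < β := by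
      intro n
      have hε : 0 < 1 / ((n : ℝ) + 1) := by positivity
      have := hB' (fun _ => 1 - 1 / ((n : ℝ) + 1)) (1 + 1 / ((n : ℝ) + 1))
        (fun k => by linarith) (by linarith)
      simpa only [← Finset.mul_sum] using this
    have htend : Filter.Tendsto
        (fun n : ℕ => (1 - 1 / ((n : ℝ) + 1)) * (∑ k, a k) + (1 + 1 / ((n : ℝ) + 1)) * c')
        Filter.atTop (nhds ((1 - 0) * (∑ k, a k) + (1 + 0) * c')) := by
      exact (((tendsto_const_nhds.sub tendsto_one_div_add_atTop_nhds_zero_nat).mul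
        tendsto_const_nhds).add
        ((tendsto_const_nhds.add tendsto_one_div_add_atTop_nhds_zero_nat).mul
        tendsto_const_nhds))
    have := le_of_tendsto' htend fun n => (hseq n).le
    linarith [this]
  -- c' < 0
  have hc'neg : c' < 0 := by
    rcases lt_or_eq_of_le hc'le with h | h
    · exact h
    · exfalso
      have h1 := hA' (fun _ => 0) (fun k => le_refl 0)
      have h2 := hB' (fun _ => 0) 2 (fun k => one_pos) one_lt_two
      rw [h] at h1 h2
      simp only [zero_mul, mul_zero, Finset.sum_const_zero, zero_add, add_zero] at h1 h2
      linarith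
  set c : ℝ := -c' with hcdef
  have hc : 0 < c := by linarith
  -- main bound
  have hmain : ∀ u : Fin K → ℝ, (∀ k, 0 ≤ u k) →
      F u ≤ 1 + ∑ k, (a k / c) * (u k - 1) := by
    intro u hu
    have h1 := hA' u hu
    have hkey : c * F u ≤ c + ∑ k, a k * (u k - 1) := by
      have hdiff : ∑ k, a k * (u k - 1) = (∑ k, u k * a k) - ∑ k, a k := by
        rw [← Finset.sum_sub_distrib]
        exact Finset.sum_congr rfl fun k _ => by ring
      rw [hdiff]
      have : F u * c' = -(c * F u) := by rw [hcdef]; ring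
      linarith [h1, hsumβ]
    have hsum_div : ∑ k, (a k / c) * (u k - 1) = (∑ k, a k * (u k - 1)) / c := by
      rw [Finset.sum_div]
      exact Finset.sum_congr rfl fun k _ => by ring
    rw [hsum_div, ← sub_nonneg]
    have heq : 1 + (∑ k, a k * (u k - 1)) / c - F u
        = (c + ∑ k, a k * (u k - 1) - c * F u) / c := by
      field_simp
    rw [heq]
    exact div_nonneg (by linarith) hc.le
  have hsw : ∑ k, a k / c ≤ 1 := by
    have h0 : F (fun _ => 0) ≤ 1 + ∑ k, (a k / c) * ((0:ℝ) - 1) :=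
      hmain (fun _ => 0) (fun k => le_refl 0)
    have hF00 : 0 ≤ F (fun _ => 0) := hF0 _ (fun k => le_refl 0)
    have hz : ∑ k, (a k / c) * ((0:ℝ) - 1) + ∑ k, a k / c = 0 := by
      rw [← Finset.sum_add_distrib]
      apply Finset.sum_eq_zero
      intro k _
      ring
    linarith
  refine ⟨fun k => a k / c, fun k => ⟨div_nonneg (ha k) hc.le, ?_⟩, hsw, hmain⟩
  exact le_trans (Finset.single_le_sum (f := fun k => a k / c)
    (fun j _ => div_nonneg (ha j) hc.le) (Finset.mem_univ k)) hsw
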